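/- Let γ > 1, and suppose W : ℝⁿ → (0, ∞) satisfies W(x) ≥ A·|x|^γ for some A > 0, and g : ℝⁿ → (0, ∞) is C¹ with |∇g(x)| ≤ B·(|x|^(γ−1) + 1) and g(x) ≥ C·(|x|^γ + 1) for positive constants B, C. Then there exist constants C₁, C₂, h₁ > 0 such that for all h ∈ (0, h₁) and all x ∈ ℝⁿ: −C₁·h·(1 + |x|^γ) ≤ Q_h(g)(x) − g(x) ≤ C₂·h·(|x|^(γ−1) + 1), where Q_h(g)(x) = inf_{y} { g(x−y) + h·W(y/h) }. -/

import Mathlib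

set_option maxHeartbeats 1000000 in
theorem hopf_lax_two_sided_bound {n : ℕ} (γ : ℝ) (hγ : 1 < γ)
    (W : EuclideanSpace ℝ (Fin n) → ℝ) (hWpos : ∀ x, 0 < W x)
    (A : ℝ) (hA : 0 < A) (hW : ∀ x, A * ‖x‖ ^ γ ≤ W x)
    (g : EuclideanSpace ℝ (Fin n) → ℝ) (hgpos : ∀ x, 0 < g x)
    (hg : ContDiff ℝ 1 g)
    (B : ℝ) (hB : 0 < B) (hgrad : ∀ x, ‖gradient g x‖ ≤ B * (‖x‖ ^ (γ - 1) + 1))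
    (C : ℝ) (hC : 0 < C) (hglb : ∀ x, C * (‖x‖ ^ γ + 1) ≤ g x) :
    ∃ C₁ > (0:ℝ), ∃ C₂ > (0:ℝ), ∃ h₁ > (0:ℝ), ∀ h ∈ Set.Ioo (0:ℝ) h₁, ∀ x,
      -C₁ * h * (1 + ‖x‖ ^ γ) ≤ (⨅ y, (g (x - y) + h * W (h⁻¹ • y))) - g x ∧
      (⨅ y, (g (x - y) + h * W (h⁻¹ • y))) - g x ≤ C₂ * h * (‖x‖ ^ (γ - 1) + 1) := by
  have hγ0 : (0:ℝ) < γ := lt_trans one_pos hγ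
  set p := γ - 1 with hp_def
  have hp : 0 < p := by simp only [hp_def]; linarith
  have hpγ : p + 1 = γ := by simp [hp_def]
  -- norm of fderiv equals norm of gradient
  have hnormgrad : ∀ z, ‖fderiv ℝ g z‖ = ‖gradient g z‖ := fun z =>
    ((InnerProductSpace.toDual ℝ _).symm.norm_map _).symm
  -- mean value inequality
  have mvt : ∀ x y : EuclideanSpace ℝ (Fin n),
      g x - g (x - y) ≤ B * ((‖x‖ + ‖y‖) ^ p + 1) * ‖y‖ := by
    intro x y
    have hsub : ‖g x - g (x - y)‖ ≤ B * ((‖x‖ + ‖y‖) ^ p + 1) * ‖x - (x - y)‖ := by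
      refine (convex_closedBall (0 : EuclideanSpace ℝ (Fin n)) (‖x‖ + ‖y‖)).norm_image_sub_le_of_norm_fderiv_le
        (fun z _ => (hg.differentiable one_ne_zero).differentiableAt) ?_ ?_ ?_
      · intro z hz
        rw [hnormgrad]
        refine (hgrad z).trans ?_
        have hz' : ‖z‖ ≤ ‖x‖ + ‖y‖ := by
          simpa [Metric.mem_closedBall, dist_eq_norm] using hz
        have : ‖z‖ ^ p ≤ (‖x‖ + ‖y‖) ^ p :=
          Real.rpow_le_rpow (norm_nonneg _) hz' hp.le
        nlinarith
      · simp only [Metric.mem_closedBall, dist_eq_norm, sub_zero]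
        exact (norm_sub_le x y)
      · simp only [Metric.mem_closedBall, dist_eq_norm, sub_zero]
        linarith [norm_nonneg y]
    have : ‖x - (x - y)‖ = ‖y‖ := by rw [sub_sub_cancel]
    rw [this] at hsub
    calc g x - g (x - y) ≤ ‖g x - g (x - y)‖ := le_abs_self _
      _ ≤ _ := hsub
  -- constants
  set B' := B * (2 ^ p + 1) with hB'_def
  have h2p : (0:ℝ) < 2 ^ p := by positivity
  have hB' : 0 < B' := by positivity
  set lam := max 1 ((B' / A) ^ p⁻¹) with hlam_def
  have hlam1 : (1:ℝ) ≤ lam := le_max_left _ _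
  have hlam : (0:ℝ) < lam := lt_of_lt_of_le one_pos hlam1
  set D := g 0 + B' with hD_def
  have hD : 0 < D := by have := hgpos 0; positivity
  set h₁ := min (min 1 lam⁻¹) ((A / D) ^ p⁻¹) with hh₁_def
  have hh₁ : 0 < h₁ := by
    refine lt_min (lt_min one_pos (by positivity)) ?_
    positivity
  set C₁ := B' * lam * 2 ^ γ with hC₁_def
  have h2γ : (0:ℝ) < 2 ^ γ := by positivity
  have hC₁ : 0 < C₁ := by positivity
  clear_value p B' lam D h₁ C₁
  -- growth bound on g
  have hgrowth : ∀ x : EuclideanSpace ℝ (Fin n), g x ≤ D * (1 + ‖x‖) ^ γ := by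
    intro x
    have h1x : (0:ℝ) < 1 + ‖x‖ := by positivity
    have e0 := mvt x x
    rw [sub_self] at e0
    have e1 : (‖x‖ + ‖x‖) ^ p ≤ 2 ^ p * (1 + ‖x‖) ^ p := by
      rw [← Real.mul_rpow (by norm_num) h1x.le]
      refine Real.rpow_le_rpow (by positivity) (by linarith [norm_nonneg x]) hp.le
    have e2 : (1:ℝ) ≤ (1 + ‖x‖) ^ p := by
      have := Real.rpow_le_rpow zero_le_one (show (1:ℝ) ≤ 1 + ‖x‖ by linarith [norm_nonneg x]) hp.le
      rwa [Real.one_rpow] at this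
    have e3 : (1 + ‖x‖) ^ γ = (1 + ‖x‖) ^ p * (1 + ‖x‖) := by
      rw [← hpγ, Real.rpow_add_one h1x.ne']
    have e4 : ‖x‖ ≤ 1 + ‖x‖ := by linarith
    have e5 : g x - g 0 ≤ B' * (1 + ‖x‖) ^ γ := by
      calc g x - g 0 ≤ B * ((‖x‖ + ‖x‖) ^ p + 1) * ‖x‖ := e0
        _ ≤ B * (2 ^ p * (1 + ‖x‖) ^ p + (1 + ‖x‖) ^ p) * (1 + ‖x‖) := by
            refine mul_le_mul ?_ e4 (norm_nonneg x) (by positivity)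
            have : (‖x‖ + ‖x‖) ^ p + 1 ≤ 2 ^ p * (1 + ‖x‖) ^ p + (1 + ‖x‖) ^ p := by linarith
            nlinarith
        _ = B' * (1 + ‖x‖) ^ γ := by rw [e3, hB'_def]; ring
    have e6 : (1:ℝ) ≤ (1 + ‖x‖) ^ γ := by
      have := Real.rpow_le_rpow zero_le_one (show (1:ℝ) ≤ 1 + ‖x‖ by linarith [norm_nonneg x]) hγ0.le
      rwa [Real.one_rpow] at this
    have := hgpos 0
    rw [hD_def]
    nlinarith
  -- the key comparison: (1+t)^γ ≤ 2^γ (1 + t^γ)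
  have hsplit : ∀ t : ℝ, 0 ≤ t → (1 + t) ^ γ ≤ 2 ^ γ * (1 + t ^ γ) := by
    intro t ht
    have htγ : 0 ≤ t ^ γ := Real.rpow_nonneg ht γ
    rcases le_or_gt t 1 with h | h
    · have : (1 + t) ^ γ ≤ 2 ^ γ :=
        Real.rpow_le_rpow (by linarith) (by linarith) hγ0.le
      nlinarith
    · have : (1 + t) ^ γ ≤ (2 * t) ^ γ :=
        Real.rpow_le_rpow (by linarith) (by linarith) hγ0.le
      rw [Real.mul_rpow (by norm_num) ht] at this
      nlinarith
  refine ⟨C₁, hC₁, W 0, hWpos 0, h₁, hh₁, ?_⟩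
  rintro h ⟨hh0, hhh₁⟩ x
  rw [hh₁_def] at hhh₁
  have hh1 : h < 1 := lt_of_lt_of_le hhh₁ ((min_le_left _ _).trans (min_le_left _ _))
  have hhlam : lam * h < 1 := by
    have : h < lam⁻¹ := lt_of_lt_of_le hhh₁ ((min_le_left _ _).trans (min_le_right _ _))
    calc lam * h < lam * lam⁻¹ := by exact (mul_lt_mul_iff_right₀ hlam).2 this
      _ = 1 := mul_inv_cancel₀ hlam.ne'
  have hhAD : h ^ p ≤ A / D := by
    have h1 : h ≤ (A / D) ^ p⁻¹ := (le_of_lt (lt_of_lt_of_le hhh₁ (min_le_right _ _)))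
    calc h ^ p ≤ ((A / D) ^ p⁻¹) ^ p := Real.rpow_le_rpow hh0.le h1 hp.le
      _ = A / D := Real.rpow_inv_rpow (by positivity) hp.ne'
  have h1x : (0:ℝ) < 1 + ‖x‖ := by positivity
  have hxγ : (0:ℝ) ≤ ‖x‖ ^ γ := Real.rpow_nonneg (norm_nonneg _) γ
  have hxp : (0:ℝ) ≤ ‖x‖ ^ p := Real.rpow_nonneg (norm_nonneg _) p
  have h1xp : (1:ℝ) ≤ (1 + ‖x‖) ^ p := by
    have := Real.rpow_le_rpow zero_le_one (show (1:ℝ) ≤ 1 + ‖x‖ by linarith [norm_nonneg x]) hp.le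
    rwa [Real.one_rpow] at this
  have h1xγeq : (1 + ‖x‖) ^ γ = (1 + ‖x‖) ^ p * (1 + ‖x‖) := by
    rw [← hpγ, Real.rpow_add_one h1x.ne']
  -- key pointwise lower bound
  have key : ∀ y : EuclideanSpace ℝ (Fin n),
      g x - C₁ * h * (1 + ‖x‖ ^ γ) ≤ g (x - y) + h * W (h⁻¹ • y) := by
    intro y
    have hny : ‖h⁻¹ • y‖ = ‖y‖ / h := by
      rw [norm_smul, Real.norm_eq_abs, abs_inv, abs_of_pos hh0, div_eq_inv_mul]
    have hWy : A * (‖y‖ / h) ^ γ ≤ W (h⁻¹ • y) := by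
      have := hW (h⁻¹ • y); rwa [hny] at this
    have hWy0 : 0 ≤ h * W (h⁻¹ • y) := mul_nonneg hh0.le (hWpos _).le
    -- common MVT consequence when ‖x‖+‖y‖ ≤ 2(1+‖x‖)
    have mvt2 : ‖x‖ + ‖y‖ ≤ 2 * (1 + ‖x‖) →
        g x - g (x - y) ≤ B' * (1 + ‖x‖) ^ p * ‖y‖ := by
      intro hxy
      have e1 : (‖x‖ + ‖y‖) ^ p ≤ 2 ^ p * (1 + ‖x‖) ^ p := by
        rw [← Real.mul_rpow (by norm_num) h1x.le]
        exact Real.rpow_le_rpow (by positivity) hxy hp.le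
      calc g x - g (x - y) ≤ B * ((‖x‖ + ‖y‖) ^ p + 1) * ‖y‖ := mvt x y
        _ ≤ B' * (1 + ‖x‖) ^ p * ‖y‖ := by
            refine mul_le_mul_of_nonneg_right ?_ (norm_nonneg y)
            rw [hB'_def]
            nlinarith
    rcases le_or_gt ‖y‖ (lam * h * (1 + ‖x‖)) with hy | hy
    · -- small y : use MVT directly
      have hxy : ‖x‖ + ‖y‖ ≤ 2 * (1 + ‖x‖) := by nlinarith [norm_nonneg x]
      have e1 := mvt2 hxy
      have e2 : B' * (1 + ‖x‖) ^ p * ‖y‖ ≤ B' * (1 + ‖x‖) ^ p * (lam * h * (1 + ‖x‖)) := by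
        refine mul_le_mul_of_nonneg_left hy (by positivity)
      have e3 : B' * (1 + ‖x‖) ^ p * (lam * h * (1 + ‖x‖)) = B' * lam * h * (1 + ‖x‖) ^ γ := by
        rw [h1xγeq]; ring
      have e4 : (1 + ‖x‖) ^ γ ≤ 2 ^ γ * (1 + ‖x‖ ^ γ) := hsplit ‖x‖ (norm_nonneg x)
      have e5 : B' * lam * h * (1 + ‖x‖) ^ γ ≤ C₁ * h * (1 + ‖x‖ ^ γ) := by
        rw [hC₁_def]
        calc B' * lam * h * (1 + ‖x‖) ^ γ ≤ B' * lam * h * (2 ^ γ * (1 + ‖x‖ ^ γ)) :=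
              mul_le_mul_of_nonneg_left e4 (by positivity)
          _ = B' * lam * 2 ^ γ * h * (1 + ‖x‖ ^ γ) := by ring
      linarith
    · have hy0 : 0 < ‖y‖ := lt_of_le_of_lt (by positivity) hy
      have hyh : lam * (1 + ‖x‖) < ‖y‖ / h := by
        rw [lt_div_iff₀ hh0]; nlinarith
      rcases le_or_gt ‖y‖ (1 + ‖x‖) with hy2 | hy2
      · -- intermediate y : penalty beats the gradient
        have hxy : ‖x‖ + ‖y‖ ≤ 2 * (1 + ‖x‖) := by linarith
        have e1 := mvt2 hxy
        have hq : (0:ℝ) < ‖y‖ / h := div_pos hy0 hh0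
        have eW : h * (A * (‖y‖ / h) ^ γ) = A * (‖y‖ / h) ^ p * ‖y‖ := by
          rw [← hpγ, Real.rpow_add_one hq.ne']
          field_simp
        have e2 : (lam * (1 + ‖x‖)) ^ p ≤ (‖y‖ / h) ^ p :=
          Real.rpow_le_rpow (by positivity) hyh.le hp.le
        have e3 : (lam * (1 + ‖x‖)) ^ p = lam ^ p * (1 + ‖x‖) ^ p :=
          Real.mul_rpow hlam.le h1x.le
        have e4 : B' ≤ A * lam ^ p := by
          have h5 : (B' / A) ^ p⁻¹ ≤ lam := by rw [hlam_def]; exact le_max_right _ _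
          have h6 : ((B' / A) ^ p⁻¹) ^ p ≤ lam ^ p :=
            Real.rpow_le_rpow (by positivity) h5 hp.le
          rw [Real.rpow_inv_rpow (by positivity) hp.ne'] at h6
          rw [← div_le_iff₀' hA] at * <;> linarith
        have e5 : B' * (1 + ‖x‖) ^ p * ‖y‖ ≤ h * W (h⁻¹ • y) := by
          calc B' * (1 + ‖x‖) ^ p * ‖y‖ ≤ A * lam ^ p * (1 + ‖x‖) ^ p * ‖y‖ := by
                refine mul_le_mul_of_nonneg_right (mul_le_mul_of_nonneg_right e4 (by positivity)) hy0.le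
            _ = A * ((lam * (1 + ‖x‖)) ^ p) * ‖y‖ := by rw [e3]; ring
            _ ≤ A * (‖y‖ / h) ^ p * ‖y‖ := by
                refine mul_le_mul_of_nonneg_right (mul_le_mul_of_nonneg_left e2 hA.le) hy0.le
            _ = h * (A * (‖y‖ / h) ^ γ) := eW.symm
            _ ≤ h * W (h⁻¹ • y) := by
                refine mul_le_mul_of_nonneg_left ?_ hh0.le
                exact le_trans (le_of_eq rfl) hWy
        have : 0 ≤ C₁ * h * (1 + ‖x‖ ^ γ) := by positivity
        have := hgpos (x - y)
        linarith
    -- large y : penalty beats g x entirely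
      · have e1 : g x ≤ D * (1 + ‖x‖) ^ γ := hgrowth x
        have hq : (0:ℝ) < ‖y‖ / h := div_pos hy0 hh0
        have e2 : (1 + ‖x‖) ^ γ ≤ ‖y‖ ^ γ :=
          Real.rpow_le_rpow h1x.le hy2.le hγ0.le
        have hhp : (0:ℝ) < h ^ p := Real.rpow_pos_of_pos hh0 p
        have eW : h * (A * (‖y‖ / h) ^ γ) = A * ‖y‖ ^ γ / h ^ p := by
          rw [Real.div_rpow (norm_nonneg y) hh0.le, ← hpγ, Real.rpow_add_one hh0.ne']
          field_simp
        have e3 : D * ‖y‖ ^ γ ≤ A * ‖y‖ ^ γ / h ^ p := by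
          rw [le_div_iff₀ hhp]
          have hyγ : (0:ℝ) ≤ ‖y‖ ^ γ := Real.rpow_nonneg (norm_nonneg _) γ
          have hDA : D * h ^ p ≤ A := by
            calc D * h ^ p ≤ D * (A / D) := mul_le_mul_of_nonneg_left hhAD hD.le
              _ = A := by field_simp
          nlinarith
        have e4 : g x ≤ h * W (h⁻¹ • y) := by
          calc g x ≤ D * (1 + ‖x‖) ^ γ := e1
            _ ≤ D * ‖y‖ ^ γ := mul_le_mul_of_nonneg_left e2 hD.le
            _ ≤ A * ‖y‖ ^ γ / h ^ p := e3
            _ = h * (A * (‖y‖ / h) ^ γ) := eW.symm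
            _ ≤ h * W (h⁻¹ • y) := mul_le_mul_of_nonneg_left hWy hh0.le
        have : 0 ≤ C₁ * h * (1 + ‖x‖ ^ γ) := by positivity
        have := hgpos (x - y)
        linarith
  -- assemble
  have hbdd : BddBelow (Set.range fun y => g (x - y) + h * W (h⁻¹ • y)) := by
    refine ⟨0, ?_⟩
    rintro _ ⟨y, rfl⟩
    have := hgpos (x - y)
    have := hWpos (h⁻¹ • y)
    nlinarith
  constructor
  · have hinf : g x - C₁ * h * (1 + ‖x‖ ^ γ) ≤ ⨅ y, (g (x - y) + h * W (h⁻¹ • y)) :=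
      le_ciInf key
    linarith
  · have hle : (⨅ y, (g (x - y) + h * W (h⁻¹ • y))) ≤ g x + h * W 0 := by
      have := ciInf_le hbdd (0 : EuclideanSpace ℝ (Fin n))
      simpa using this
    have : h * W 0 ≤ W 0 * h * (‖x‖ ^ p + 1) := by
      have h2 : 0 ≤ W 0 * h * ‖x‖ ^ p := mul_nonneg (mul_nonneg (hWpos 0).le hh0.le) hxp
      nlinarith
    linarith
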